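/- Let N be a positive integer and let w₁, …, w_N be nonnegative integers. Consider the minimization problem v* = min { Σ_{i∈[N]} ξᵢ yᵢ : ξ ∈ [−1,1]^N, y ∈ [−1,1]^N, Σ_{i∈[N]} wᵢ yᵢ = 0 } (the feasible set is nonempty and compact, so the minimum is attained). Then v* = −N if and only if there exists a subset S ⊆ [N] such that Σ_{i∈S} wᵢ = Σ_{i∈[N]∖S} wᵢ. -/
import Mathlib


/-- The optimal value of
`min { ∑ ξᵢ yᵢ : ξ ∈ [−1,1]^N, y ∈ [−1,1]^N, ∑ wᵢ yᵢ = 0 }` equals `−N` if and only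
if there is a subset `S ⊆ [N]` with `∑_{i∈S} wᵢ = ∑_{i∉S} wᵢ` (set partition). -/
theorem partition_reduction {N : ℕ} (hN : 0 < N) (w : Fin N → ℕ) :
    sInf {v : ℝ | ∃ ξ y : Fin N → ℝ,
        (∀ i, ξ i ∈ Set.Icc (-1 : ℝ) 1) ∧ (∀ i, y i ∈ Set.Icc (-1 : ℝ) 1) ∧
        (∑ i, (w i : ℝ) * y i) = 0 ∧ v = ∑ i, ξ i * y i} = -(N : ℝ) ↔
      ∃ S : Finset (Fin N), (∑ i ∈ S, w i) = ∑ i ∈ Sᶜ, w i := by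
  set A := {v : ℝ | ∃ ξ y : Fin N → ℝ,
        (∀ i, ξ i ∈ Set.Icc (-1 : ℝ) 1) ∧ (∀ i, y i ∈ Set.Icc (-1 : ℝ) 1) ∧
        (∑ i, (w i : ℝ) * y i) = 0 ∧ v = ∑ i, ξ i * y i} with hA
  have hmem0 : (0:ℝ) ∈ A := ⟨0, 0, by simp, by simp, by simp, by simp⟩
  have hne : A.Nonempty := ⟨0, hmem0⟩
  have hlb : ∀ v ∈ A, -(N:ℝ) ≤ v := by
    rintro v ⟨ξ, y, hξ, hy, -, rfl⟩
    calc -(N:ℝ) = ∑ _i : Fin N, (-1:ℝ) := by simp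
    _ ≤ ∑ i, ξ i * y i := Finset.sum_le_sum fun i _ => by
          nlinarith [(hξ i).1, (hξ i).2, (hy i).1, (hy i).2]
  constructor
  · intro h
    set W : ℕ := ∑ i, w i with hW
    set ε : ℝ := 1 / ((W:ℝ) + 1) with hε
    have hWpos : (0:ℝ) < (W:ℝ) + 1 := by positivity
    have hεpos : 0 < ε := by positivity
    have hexists : ∃ v ∈ A, v < -(N:ℝ) + ε := by
      by_contra hc
      push_neg at hc
      have := le_csInf hne hc
      rw [h] at this
      linarith
    obtain ⟨v, ⟨ξ, y, hξ, hy, hwy, rfl⟩, hv⟩ := hexists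
    -- each term is close to -1
    have hterm : ∀ i, ξ i * y i < -1 + ε := by
      intro i
      have hsplit : ξ i * y i + ∑ j ∈ Finset.univ.erase i, ξ j * y j
          = ∑ j, ξ j * y j :=
        Finset.add_sum_erase Finset.univ (fun j => ξ j * y j) (Finset.mem_univ i)
      have hrest : -((N:ℝ) - 1) ≤ ∑ j ∈ Finset.univ.erase i, ξ j * y j := by
        have : ∑ _j ∈ Finset.univ.erase i, (-1:ℝ) ≤
            ∑ j ∈ Finset.univ.erase i, ξ j * y j :=
          Finset.sum_le_sum fun j _ => by
            nlinarith [(hξ j).1, (hξ j).2, (hy j).1, (hy j).2]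
        have hcard : (Finset.univ.erase i).card = N - 1 := by
          simp [Finset.card_erase_of_mem]
        rw [Finset.sum_const, hcard] at this
        have : -(((N - 1 : ℕ) : ℝ)) ≤ ∑ j ∈ Finset.univ.erase i, ξ j * y j := by
          simpa [nsmul_eq_mul] using this
        rwa [Nat.cast_sub hN, Nat.cast_one] at this
      linarith [hsplit, hrest, hv]
    have habs : ∀ i, 1 - ε < |y i| := by
      intro i
      have h1 : 1 - ε < -(ξ i * y i) := by linarith [hterm i]
      calc 1 - ε < -(ξ i * y i) := h1
      _ ≤ |ξ i * y i| := neg_le_abs _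
      _ = |ξ i| * |y i| := abs_mul _ _
      _ ≤ 1 * |y i| := mul_le_mul_of_nonneg_right (abs_le.mpr (hξ i)) (abs_nonneg _)
      _ = |y i| := one_mul _
    set s : Fin N → ℝ := fun i => if 0 < y i then 1 else -1 with hs
    set S : Finset (Fin N) := Finset.univ.filter (fun i => 0 < y i) with hSdef
    have hsy : ∀ i, |s i - y i| < ε := by
      intro i
      have h1 := (hy i).1
      have h2 := (hy i).2
      have h3 := habs i
      by_cases hp : 0 < y i
      · simp only [hs, if_pos hp]
        rw [abs_of_pos hp] at h3
        rw [abs_of_nonneg (by linarith)]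
        linarith
      · simp only [hs, if_neg hp]
        push_neg at hp
        rw [abs_of_nonpos hp] at h3
        rw [abs_of_nonpos (by linarith)]
        linarith
    have hsum_close : |∑ i, (w i : ℝ) * s i| < 1 := by
      have heq : ∑ i, (w i : ℝ) * s i =
          ∑ i, (w i : ℝ) * (s i - y i) := by
        rw [← sub_zero (∑ i, (w i : ℝ) * s i), ← hwy, ← Finset.sum_sub_distrib]
        exact Finset.sum_congr rfl fun i _ => by ring
      rw [heq]
      calc |∑ i, (w i : ℝ) * (s i - y i)| ≤ ∑ i, |(w i : ℝ) * (s i - y i)| :=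
            Finset.abs_sum_le_sum_abs _ _
      _ = ∑ i, (w i : ℝ) * |s i - y i| := by
            exact Finset.sum_congr rfl fun i _ => by
              rw [abs_mul, abs_of_nonneg (by positivity : (0:ℝ) ≤ (w i : ℝ))]
      _ ≤ ∑ i, (w i : ℝ) * ε :=
            Finset.sum_le_sum fun i _ =>
              mul_le_mul_of_nonneg_left (le_of_lt (hsy i)) (by positivity)
      _ = (W : ℝ) * ε := by rw [← Finset.sum_mul]; push_cast [hW]; ring
      _ < 1 := by
            rw [hε]
            rw [mul_one_div, div_lt_one hWpos]
            linarith
    have hsum_split : ∑ i, (w i : ℝ) * s i =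
        ((∑ i ∈ S, w i : ℕ) : ℝ) - ((∑ i ∈ Sᶜ, w i : ℕ) : ℝ) := by
      have : ∑ i, (w i : ℝ) * s i =
          ∑ i ∈ S, (w i : ℝ) + ∑ i ∈ Sᶜ, (-(w i : ℝ)) := by
        rw [hSdef]
        rw [← Finset.sum_filter_add_sum_filter_not Finset.univ (fun i => 0 < y i)
          (fun i => (w i : ℝ) * s i)]
        congr 1
        · exact Finset.sum_congr rfl fun i hi => by
            simp only [hs, if_pos (Finset.mem_filter.mp hi).2, mul_one]
        · rw [show (Finset.univ.filter (fun i => 0 < y i))ᶜ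
              = Finset.univ.filter (fun i => ¬ 0 < y i) by
                ext x; simp]
          exact Finset.sum_congr rfl fun i hi => by
            simp only [hs, if_neg (Finset.mem_filter.mp hi).2, mul_neg_one]
      rw [this]
      push_cast
      rw [Finset.sum_neg_distrib]
      ring
    rw [hsum_split] at hsum_close
    rw [abs_sub_lt_iff] at hsum_close
    obtain ⟨hc1, hc2⟩ := hsum_close
    refine ⟨S, ?_⟩
    have hn1 : (∑ i ∈ S, w i) < (∑ i ∈ Sᶜ, w i) + 1 := by
      have : ((∑ i ∈ S, w i : ℕ) : ℝ) < ((∑ i ∈ Sᶜ, w i : ℕ) : ℝ) + 1 := by linarith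
      exact_mod_cast this
    have hn2 : (∑ i ∈ Sᶜ, w i) < (∑ i ∈ S, w i) + 1 := by
      have : ((∑ i ∈ Sᶜ, w i : ℕ) : ℝ) < ((∑ i ∈ S, w i : ℕ) : ℝ) + 1 := by linarith
      exact_mod_cast this
    omega
  · rintro ⟨S, hS⟩
    have hmem : (-(N:ℝ)) ∈ A := by
      refine ⟨fun i => if i ∈ S then -1 else 1, fun i => if i ∈ S then 1 else -1,
        ?_, ?_, ?_, ?_⟩
      · intro i; by_cases h : i ∈ S <;> simp [h]
      · intro i; by_cases h : i ∈ S <;> simp [h]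
      · have : ∑ i, (w i : ℝ) * (if i ∈ S then (1:ℝ) else -1) =
            ∑ i ∈ S, (w i : ℝ) - ∑ i ∈ Sᶜ, (w i : ℝ) := by
          rw [← Finset.sum_filter_add_sum_filter_not Finset.univ (fun i => i ∈ S)]
          simp only [Finset.filter_mem_eq_inter, Finset.univ_inter]
          rw [show Finset.univ.filter (fun i => ¬ i ∈ S) = Sᶜ by ext x; simp]
          rw [sub_eq_add_neg, ← Finset.sum_neg_distrib]
          congr 1
          · exact Finset.sum_congr rfl fun i hi => by simp [hi]
          · exact Finset.sum_congr rfl fun i hi => by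
              simp [Finset.mem_compl.mp hi]
        rw [this]
        have : ((∑ i ∈ S, w i : ℕ) : ℝ) = ((∑ i ∈ Sᶜ, w i : ℕ) : ℝ) := by
          exact_mod_cast congrArg (Nat.cast : ℕ → ℝ) hS
        push_cast at this
        linarith
      · have : ∀ i, (if i ∈ S then (-1:ℝ) else 1) * (if i ∈ S then (1:ℝ) else -1)
            = -1 := by intro i; by_cases h : i ∈ S <;> simp [h]
        simp only [this, Finset.sum_const, Finset.card_univ, Fintype.card_fin,
          nsmul_eq_mul, mul_neg_one]
    exact le_antisymm (csInf_le ⟨-(N:ℝ), fun v hv => hlb v hv⟩ hmem) (le_csInf hne hlb)
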